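/- Let g be a convex C¹ function on an open convex set D ⊂ ℝ^m and let a ∈ D. Then there exist constants b > 0, c > 0, d > 0 such that for all x ∈ D: ⟨∇g(x), x − a⟩ ≥ b·‖∇g(x)‖ − c·‖x − a‖ − d. -/

import Mathlib

open RealInnerProductSpace

section Aux

variable {m : ℕ}

/-- First-order inequality for a convex differentiable function. -/
lemma grad_ineq_aux {D : Set (EuclideanSpace ℝ (Fin m))}
    {g : EuclideanSpace ℝ (Fin m) → ℝ} {g' : EuclideanSpace ℝ (Fin m) → EuclideanSpace ℝ (Fin m)}
    (hconv : ConvexOn ℝ D g)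
    (hdiff : ∀ x ∈ D, HasGradientAt g (g' x) x)
    {x y : EuclideanSpace ℝ (Fin m)} (hx : x ∈ D) (hy : y ∈ D) :
    ⟪g' x, y - x⟫ ≤ g y - g x := by
  by_cases hxy : y = x
  · simp [hxy]
  set v := y - x with hv
  set φ : ℝ → ℝ := fun t => g (t • v + x) with hφdef
  -- φ is convex on [0,1]
  have hφ : ConvexOn ℝ (Set.Icc (0:ℝ) 1) φ := by
    have hcomp := hconv.comp_affineMap (AffineMap.lineMap x y)
    have heq : g ∘ ⇑(AffineMap.lineMap x y) = φ := by
      funext t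
      simp [hφdef, AffineMap.lineMap_apply, hv]
    rw [heq] at hcomp
    refine hcomp.subset ?_ (convex_Icc 0 1)
    intro t ht
    exact Set.mem_preimage.mpr (hconv.1.lineMap_mem hx hy ht)
  -- derivative of φ at 0
  have hderiv : HasDerivAt φ ⟪g' x, v⟫ 0 := by
    have hcurve : HasDerivAt (fun t : ℝ => t • v + x) v 0 := by
      have h1 : HasDerivAt (fun t : ℝ => t • v) ((1:ℝ) • v) 0 := (hasDerivAt_id 0).smul_const v
      simpa using h1.add_const x
    have hgrad : HasFDerivAt g ((InnerProductSpace.toDual ℝ _) (g' x))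
        ((fun t : ℝ => t • v + x) 0) := by simpa using (hdiff x hx).hasFDerivAt
    have := hgrad.comp_hasDerivAt 0 hcurve
    exact this
  -- slope inequality
  have hslope := hφ.le_slope_of_hasDerivAt (x := (0:ℝ)) (y := (1:ℝ))
    (by simp) (by simp) one_pos hderiv
  have hsl : slope φ 0 1 = g y - g x := by
    have h1 : φ 1 = g y := by simp [hφdef, hv]
    have h0 : φ 0 = g x := by simp [hφdef]
    simp [slope, h1, h0]
  rw [hsl] at hslope
  simpa [hv] using hslope

/-- Monotonicity of the gradient of a convex function. -/
lemma grad_mono_aux {D : Set (EuclideanSpace ℝ (Fin m))}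
    {g : EuclideanSpace ℝ (Fin m) → ℝ} {g' : EuclideanSpace ℝ (Fin m) → EuclideanSpace ℝ (Fin m)}
    (hconv : ConvexOn ℝ D g)
    (hdiff : ∀ x ∈ D, HasGradientAt g (g' x) x)
    {x y : EuclideanSpace ℝ (Fin m)} (hx : x ∈ D) (hy : y ∈ D) :
    0 ≤ ⟪g' x - g' y, x - y⟫ := by
  have h1 := grad_ineq_aux hconv hdiff hx hy
  have h2 := grad_ineq_aux hconv hdiff hy hx
  have : ⟪g' x, y - x⟫ + ⟪g' y, x - y⟫ ≤ 0 := by linarith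
  have hrw : ⟪g' x - g' y, x - y⟫ = -(⟪g' x, y - x⟫ + ⟪g' y, x - y⟫) := by
    rw [inner_sub_left]
    have : (y - x : EuclideanSpace ℝ (Fin m)) = -(x - y) := by abel
    rw [this, inner_neg_right]
    ring
  rw [hrw]
  linarith

end Aux

/-- Cépa–Lépingle inequality: for a convex C¹ function g on an open convex set D
and a ∈ D, there are b, c, d > 0 with ⟨∇g(x), x − a⟩ ≥ b‖∇g(x)‖ − c‖x − a‖ − d on D. -/
theorem stmt_16 (m : ℕ) (D : Set (EuclideanSpace ℝ (Fin m)))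
    (hD : IsOpen D) (hDconv : Convex ℝ D)
    (g : EuclideanSpace ℝ (Fin m) → ℝ) (g' : EuclideanSpace ℝ (Fin m) → EuclideanSpace ℝ (Fin m))
    (hconv : ConvexOn ℝ D g)
    (hdiff : ∀ x ∈ D, HasGradientAt g (g' x) x)
    (hcont : ContinuousOn g' D)
    (a : EuclideanSpace ℝ (Fin m)) (ha : a ∈ D) :
    ∃ b > (0 : ℝ), ∃ c > (0 : ℝ), ∃ d > (0 : ℝ), ∀ x ∈ D,
      b * ‖g' x‖ - c * ‖x - a‖ - d ≤ ⟪g' x, x - a⟫ := by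
  -- choose ε with closedBall a ε ⊆ D
  obtain ⟨ε₀, hε₀, hball₀⟩ := Metric.isOpen_iff.mp hD a ha
  set ε := ε₀ / 2 with hε
  have hεpos : 0 < ε := by positivity
  have hball : Metric.closedBall a ε ⊆ D := by
    intro z hz
    apply hball₀
    rw [Metric.mem_ball]
    have h1 : dist z a ≤ ε := Metric.mem_closedBall.mp hz
    have h2 : ε < ε₀ := by rw [hε]; linarith
    linarith
  -- bound on gradient over the ball
  obtain ⟨M, hM⟩ := (isCompact_closedBall a ε).exists_bound_of_continuousOn
    (hcont.mono hball)
  have hM0 : 0 ≤ M := le_trans (norm_nonneg _) (hM a (Metric.mem_closedBall_self hεpos.le))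
  refine ⟨ε, hεpos, M + 1, by linarith, (M + 1) * ε, by positivity, ?_⟩
  intro x hx
  by_cases hzero : g' x = 0
  · have : (0:ℝ) ≤ (M + 1) * ‖x - a‖ + (M + 1) * ε := by positivity
    simp only [hzero, norm_zero, mul_zero, inner_zero_left]
    linarith
  · set y := a + (ε / ‖g' x‖) • g' x with hy
    have hgx : (0:ℝ) < ‖g' x‖ := norm_pos_iff.mpr hzero
    have hya : ‖y - a‖ = ε := by
      rw [hy]
      rw [add_sub_cancel_left, norm_smul, Real.norm_eq_abs, abs_of_pos (by positivity)]
      field_simp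
    have hyball : y ∈ Metric.closedBall a ε := by
      rw [Metric.mem_closedBall, dist_eq_norm, hya]
    have hyD : y ∈ D := hball hyball
    -- key decomposition
    have hmono := grad_mono_aux hconv hdiff hx hyD
    have hdecomp : ⟪g' x, x - a⟫ =
        ⟪g' x - g' y, x - y⟫ + ⟪g' y, x - y⟫ + ⟪g' x, y - a⟫ := by
      rw [inner_sub_left]
      have h1 : (x - a : EuclideanSpace ℝ (Fin m)) = (x - y) + (y - a) := by abel
      rw [h1, inner_add_right]
      ring
    have h3 : ⟪g' x, y - a⟫ = ε * ‖g' x‖ := by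
      rw [hy, add_sub_cancel_left, real_inner_smul_right, real_inner_self_eq_norm_sq]
      field_simp
    have h4 : ⟪g' y, x - y⟫ ≥ -(M * (‖x - a‖ + ε)) := by
      have hba : -(‖g' y‖ * ‖x - y‖) ≤ ⟪g' y, x - y⟫ := by
        have h := abs_real_inner_le_norm (g' y) (x - y)
        have h2 := neg_abs_le (⟪g' y, x - y⟫ : ℝ)
        linarith
      have hxy : ‖x - y‖ ≤ ‖x - a‖ + ε := by
        calc ‖x - y‖ = ‖(x - a) - (y - a)‖ := by congr 1; abel
        _ ≤ ‖x - a‖ + ‖y - a‖ := norm_sub_le _ _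
        _ = ‖x - a‖ + ε := by rw [hya]
      have hgy : ‖g' y‖ ≤ M := hM y hyball
      nlinarith [norm_nonneg (x - y), norm_nonneg (g' y), norm_nonneg (x - a)]
    have := hmono
    nlinarith [norm_nonneg (x - a)]
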